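/- arXiv:2011.05001 — 2 statements merged into one kernel-verified Lean document; each statement's English description precedes it below -/
import Mathlib

section
/- Let X be a compact metric space with distance d, and for finite Borel measures α, β on X define the Kantorovich IPM K(α,β) = sup { ∫_X f dα − ∫_X f dβ : f : X → ℝ is 1-Lipschitz }, with values taken in [0,∞]. Let μ, ν be finite Borel measures on X with equal total mass μ(X) = ν(X), and let λ ≥ 1. Then the infimum, taken in [0,∞], over all finite Borel measures π on X × X of ∫_{X×X} d dπ + λ K(π₁, μ) + λ K(π₂, ν) equals K(μ,ν). In other words, the IPM-regularized unbalanced optimal transport problem with Kantorovich regularizer and λ ≥ 1 recovers exactly the Kantorovich metric. -/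
open MeasureTheory

/-- The Kantorovich IPM: the supremum, in `[0,∞]`, of `∫ f dα − ∫ f dβ` over all
`1`-Lipschitz functions `f : X → ℝ`. -/
noncomputable def kantorovich {X : Type*} [MetricSpace X] [MeasurableSpace X]
    (α β : Measure X) : ENNReal :=
  ⨆ (f : X → ℝ) (_ : LipschitzWith 1 f),
    ENNReal.ofReal (∫ x, f x ∂α - ∫ x, f x ∂β)


section KRAux
set_option linter.unusedSectionVars false

open Finset

section LP
variable {ι : Type*} [Fintype ι] [DecidableEq ι]

/-- The feasibility/cost cone used in the LP duality proof. -/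
def krS (d : ι → ι → ℝ) : Set ((ι → ℝ) × (ι → ℝ) × ℝ) :=
  { y | ∃ Q : ι → ι → ℝ, (∀ i j, 0 ≤ Q i j) ∧ (∀ i, (∑ j, Q i j) = y.1 i) ∧
      (∀ j, (∑ i, Q i j) = y.2.1 j) ∧ (∑ i, ∑ j, Q i j * d i j) ≤ y.2.2 }

lemma krS_convex (d : ι → ι → ℝ) : Convex ℝ (krS d) := by
  rintro y ⟨Q, hQ0, hQr, hQc, hQcost⟩ z ⟨R, hR0, hRr, hRc, hRcost⟩ s t hs ht hst
  refine ⟨fun i j => s * Q i j + t * R i j, ?_, ?_, ?_, ?_⟩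
  · intro i j; exact add_nonneg (mul_nonneg hs (hQ0 i j)) (mul_nonneg ht (hR0 i j))
  · intro i
    simp only [Prod.fst_add, Prod.smul_fst, Pi.add_apply, Pi.smul_apply, smul_eq_mul]
    rw [Finset.sum_add_distrib, ← Finset.mul_sum, ← Finset.mul_sum, hQr, hRr]
  · intro j
    simp only [Prod.snd_add, Prod.smul_snd, Prod.fst_add, Prod.smul_fst, Pi.add_apply,
      Pi.smul_apply, smul_eq_mul]
    rw [Finset.sum_add_distrib, ← Finset.mul_sum, ← Finset.mul_sum, hQc, hRc]
  · simp only [Prod.snd_add, Prod.smul_snd, smul_eq_mul]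
    have : ∑ i, ∑ j, (s * Q i j + t * R i j) * d i j
        = s * (∑ i, ∑ j, Q i j * d i j) + t * (∑ i, ∑ j, R i j * d i j) := by
      rw [Finset.mul_sum, Finset.mul_sum, ← Finset.sum_add_distrib]
      refine Finset.sum_congr rfl fun i _ => ?_
      rw [Finset.mul_sum, Finset.mul_sum, ← Finset.sum_add_distrib]
      refine Finset.sum_congr rfl fun j _ => ?_
      ring
    rw [this]
    have h1 : s * (∑ i, ∑ j, Q i j * d i j) ≤ s * y.2.2 := by
      exact mul_le_mul_of_nonneg_left hQcost hs
    have h2 : t * (∑ i, ∑ j, R i j * d i j) ≤ t * z.2.2 := by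
      exact mul_le_mul_of_nonneg_left hRcost ht
    linarith

lemma krS_smul (d : ι → ι → ℝ) {y : (ι → ℝ) × (ι → ℝ) × ℝ} (hy : y ∈ krS d)
    {t : ℝ} (ht : 0 ≤ t) : t • y ∈ krS d := by
  obtain ⟨Q, hQ0, hQr, hQc, hQcost⟩ := hy
  refine ⟨fun i j => t * Q i j, fun i j => mul_nonneg ht (hQ0 i j), ?_, ?_, ?_⟩
  · intro i
    simp only [Prod.smul_fst, Pi.smul_apply, smul_eq_mul]
    rw [← Finset.mul_sum, hQr]
  · intro j
    simp only [Prod.smul_snd, Prod.smul_fst, Pi.smul_apply, smul_eq_mul]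
    rw [← Finset.mul_sum, hQc]
  · simp only [Prod.smul_snd, smul_eq_mul]
    calc ∑ i, ∑ j, t * Q i j * d i j = t * ∑ i, ∑ j, Q i j * d i j := by
          rw [Finset.mul_sum]; refine Finset.sum_congr rfl fun i _ => ?_
          rw [Finset.mul_sum]; refine Finset.sum_congr rfl fun j _ => ?_; ring
      _ ≤ t * y.2.2 := mul_le_mul_of_nonneg_left hQcost ht

lemma krS_zero (d : ι → ι → ℝ) : (0 : (ι → ℝ) × (ι → ℝ) × ℝ) ∈ krS d := by
  refine ⟨0, fun i j => le_rfl, ?_, ?_, ?_⟩ <;> simp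

lemma krS_closed (d : ι → ι → ℝ) : IsClosed (krS d) := by
  rw [← isSeqClosed_iff_isClosed]
  intro y l hy hyl
  choose Q hQ0 hQr hQc hQcost using hy
  -- row sums bounded (they converge)
  have h1 : Filter.Tendsto (fun n => ∑ i, (y n).1 i) Filter.atTop (nhds (∑ i, l.1 i)) := by
    refine tendsto_finset_sum _ fun i _ => ?_
    have := (continuous_fst.tendsto l).comp hyl
    exact (continuous_apply i).continuousAt.tendsto.comp this
  obtain ⟨R, hR⟩ : ∃ R, ∀ n, ∑ i, (y n).1 i ≤ R := by
    obtain ⟨R, hR⟩ := h1.bddAbove_range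
    exact ⟨R, fun n => hR ⟨n, rfl⟩⟩
  have hQbd : ∀ n i j, Q n i j ≤ max R 0 := by
    intro n i j
    have h2 : Q n i j ≤ ∑ j', Q n i j' :=
      Finset.single_le_sum (fun j' _ => hQ0 n i j') (Finset.mem_univ j)
    have h3 : (y n).1 i ≤ ∑ i', (y n).1 i' := by
      refine Finset.single_le_sum (fun i' _ => ?_) (Finset.mem_univ i)
      rw [← hQr n i']; exact Finset.sum_nonneg fun j' _ => hQ0 n i' j'
    calc Q n i j ≤ (y n).1 i := by rw [← hQr n i]; exact h2
      _ ≤ ∑ i', (y n).1 i' := h3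
      _ ≤ R := hR n
      _ ≤ max R 0 := le_max_left _ _
  have hcompact : IsCompact (Set.Icc (0 : ι → ι → ℝ) (fun _ _ => max R 0)) := isCompact_Icc
  have hmem : ∀ n, Q n ∈ Set.Icc (0 : ι → ι → ℝ) (fun _ _ => max R 0) := by
    intro n
    constructor
    · intro i; intro j; exact hQ0 n i j
    · intro i; intro j; exact hQbd n i j
  obtain ⟨Q', hQ'mem, φ, hφ, hQ'⟩ := hcompact.tendsto_subseq hmem
  have hsub : Filter.Tendsto (y ∘ φ) Filter.atTop (nhds l) :=
    hyl.comp hφ.tendsto_atTop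
  have happ : ∀ i j, Filter.Tendsto (fun n => Q (φ n) i j) Filter.atTop (nhds (Q' i j)) := by
    intro i j
    have := ((continuous_apply j).comp (continuous_apply i)).continuousAt.tendsto.comp hQ'
    exact this
  refine ⟨Q', fun i j => hQ'mem.1 i j, ?_, ?_, ?_⟩
  · intro i
    have t1 : Filter.Tendsto (fun n => ∑ j, Q (φ n) i j) Filter.atTop (nhds (∑ j, Q' i j)) :=
      tendsto_finset_sum _ fun j _ => happ i j
    have t2 : Filter.Tendsto (fun n => ∑ j, Q (φ n) i j) Filter.atTop (nhds (l.1 i)) := by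
      have := ((continuous_apply i).comp continuous_fst).continuousAt.tendsto.comp hsub
      simp only [Function.comp] at this ⊢
      convert this using 1
      funext n; exact hQr (φ n) i
    exact tendsto_nhds_unique t1 t2
  · intro j
    have t1 : Filter.Tendsto (fun n => ∑ i, Q (φ n) i j) Filter.atTop (nhds (∑ i, Q' i j)) :=
      tendsto_finset_sum _ fun i _ => happ i j
    have t2 : Filter.Tendsto (fun n => ∑ i, Q (φ n) i j) Filter.atTop (nhds (l.2.1 j)) := by
      have := ((continuous_apply j).comp (continuous_fst.comp continuous_snd)).continuousAt.tendsto.comp hsub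
      simp only [Function.comp] at this ⊢
      convert this using 1
      funext n; exact hQc (φ n) j
    exact tendsto_nhds_unique t1 t2
  · have t1 : Filter.Tendsto (fun n => ∑ i, ∑ j, Q (φ n) i j * d i j) Filter.atTop
        (nhds (∑ i, ∑ j, Q' i j * d i j)) := by
      refine tendsto_finset_sum _ fun i _ => tendsto_finset_sum _ fun j _ => ?_
      exact (happ i j).mul_const _
    have t2 : Filter.Tendsto (fun n => (y (φ n)).2.2) Filter.atTop (nhds l.2.2) := by
      exact (continuous_snd.comp continuous_snd).continuousAt.tendsto.comp hsub
    exact le_of_tendsto_of_tendsto' t1 t2 fun n => hQcost (φ n)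

lemma kr_decomp (L : ((ι → ℝ) × (ι → ℝ) × ℝ) →L[ℝ] ℝ) (y : (ι → ℝ) × (ι → ℝ) × ℝ) :
    L y = ∑ i, y.1 i * L (Pi.single i 1, 0, 0) + ∑ i, y.2.1 i * L (0, Pi.single i 1, 0)
      + y.2.2 * L (0, 0, 1) := by
  have hy : y = (∑ i, y.1 i • ((Pi.single i 1 : ι → ℝ), (0 : ι → ℝ), (0 : ℝ)))
      + (∑ i, y.2.1 i • ((0 : ι → ℝ), (Pi.single i 1 : ι → ℝ), (0 : ℝ)))
      + y.2.2 • ((0 : ι → ℝ), (0 : ι → ℝ), (1 : ℝ)) := by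
    refine Prod.ext ?_ (Prod.ext ?_ ?_)
    · simp only [Prod.fst_add, Prod.fst_sum, Prod.smul_fst, Prod.smul_snd, smul_zero,
        Finset.sum_const_zero, add_zero]
      funext j
      simp [Finset.sum_apply, Pi.single_apply, mul_ite, Finset.sum_ite_eq', eq_comm]
    · simp only [Prod.snd_add, Prod.fst_add, Prod.snd_sum, Prod.fst_sum, Prod.smul_snd,
        Prod.smul_fst, smul_zero, Finset.sum_const_zero, zero_add, add_zero]
      funext j
      simp [Finset.sum_apply, Pi.single_apply, mul_ite, Finset.sum_ite_eq', eq_comm]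
    · simp [Prod.snd_sum, Prod.fst_sum]
  conv_lhs => rw [hy]
  rw [map_add, map_add, map_sum, map_sum, _root_.map_smul]
  simp only [_root_.map_smul, smul_eq_mul]

lemma kr_lp_duality (d : ι → ι → ℝ) (hd0 : ∀ i, d i i = 0)
    (hdnn : ∀ i j, 0 ≤ d i j) (hdtri : ∀ i j k, d i k ≤ d i j + d j k)
    (a b : ι → ℝ) (ha : ∀ i, 0 ≤ a i) (hb : ∀ i, 0 ≤ b i)
    (hab : ∑ i, a i = ∑ i, b i) {ε : ℝ} (hε : 0 < ε) :
    ∃ P : ι → ι → ℝ, (∀ i j, 0 ≤ P i j) ∧ (∀ i, ∑ j, P i j = a i) ∧ (∀ j, ∑ i, P i j = b j) ∧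
      ∃ f : ι → ℝ, (∀ i j, f i - f j ≤ d i j) ∧
        ∑ i, ∑ j, P i j * d i j ≤ (∑ i, (a i - b i) * f i) + ε := by
  by_cases hM : ∑ i, a i = 0
  · have ha0 : ∀ i, a i = 0 := fun i =>
      (Finset.sum_eq_zero_iff_of_nonneg (fun i _ => ha i)).1 hM i (Finset.mem_univ i)
    have hb0 : ∀ i, b i = 0 := fun i =>
      (Finset.sum_eq_zero_iff_of_nonneg (fun i _ => hb i)).1 (hab ▸ hM) i (Finset.mem_univ i)
    exact ⟨0, fun i j => le_rfl, fun i => by simp [ha0 i], fun j => by simp [hb0 j],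
      0, fun i j => by simpa using hdnn i j, by simp [hε.le]⟩
  · have hMpos : 0 < ∑ i, a i :=
      lt_of_le_of_ne (Finset.sum_nonneg fun i _ => ha i) (Ne.symm hM)
    set M := ∑ i, a i with hMdef
    have hne : Nonempty ι := by
      by_contra h
      rw [not_nonempty_iff] at h
      rw [hMdef, Finset.univ_eq_empty, Finset.sum_empty] at hMpos
      exact lt_irrefl 0 hMpos
    set Feas : Set (ι → ι → ℝ) :=
      {P | (∀ i j, 0 ≤ P i j) ∧ (∀ i, ∑ j, P i j = a i) ∧ (∀ j, ∑ i, P i j = b j)} with hFeas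
    have hP₀ : (fun i j => a i * b j / M) ∈ Feas := by
      refine ⟨fun i j => div_nonneg (mul_nonneg (ha i) (hb j)) hMpos.le, fun i => ?_, fun j => ?_⟩
      · have : ∑ j, a i * b j / M = a i * (∑ j, b j) / M := by
          rw [Finset.mul_sum, Finset.sum_div]
        rw [this, ← hab, mul_div_assoc, div_self hM, mul_one]
      · have : ∑ i, a i * b j / M = (∑ i, a i) * b j / M := by
          rw [Finset.sum_mul, Finset.sum_div]
        rw [this, ← hMdef, mul_comm, mul_div_assoc, div_self hM, mul_one]
    set costs : Set ℝ := (fun P : ι → ι → ℝ => ∑ i, ∑ j, P i j * d i j) '' Feas with hcosts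
    have hcne : costs.Nonempty := ⟨_, ⟨_, hP₀, rfl⟩⟩
    have hbdd : BddBelow costs := by
      refine ⟨0, ?_⟩
      rintro x ⟨P, hP, rfl⟩
      exact Finset.sum_nonneg fun i _ => Finset.sum_nonneg fun j _ =>
        mul_nonneg (hP.1 i j) (hdnn i j)
    set W := sInf costs with hW
    obtain ⟨cP, ⟨P, hPfeas, rfl⟩, hPlt⟩ :=
      exists_lt_of_csInf_lt hcne (show W < W + ε/2 by linarith)
    have hvnot : ((a, b, W - ε/2) : (ι → ℝ) × (ι → ℝ) × ℝ) ∉ krS d := by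
      rintro ⟨Q, hQ0, hQr, hQc, hQcost⟩
      have hWle : W ≤ ∑ i, ∑ j, Q i j * d i j :=
        csInf_le hbdd ⟨Q, ⟨hQ0, fun i => hQr i, fun j => hQc j⟩, rfl⟩
      simp only at hQcost
      linarith
    obtain ⟨L, u, hLu, hu⟩ :=
      geometric_hahn_banach_closed_point (krS_convex d) (krS_closed d) hvnot
    have hupos : 0 < u := by have := hLu 0 (krS_zero d); simpa using this
    have hLle : ∀ y ∈ krS d, L y ≤ 0 := by
      intro y hy
      by_contra h
      push_neg at h
      have h2 := hLu ((u / L y) • y) (krS_smul d hy (le_of_lt (div_pos hupos h)))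
      rw [_root_.map_smul, smul_eq_mul, div_mul_cancel₀ _ (ne_of_gt h)] at h2
      exact lt_irrefl u h2
    set φ : ι → ℝ := fun i => L (Pi.single i 1, 0, 0) with hφ
    set ψ : ι → ℝ := fun i => L (0, Pi.single i 1, 0) with hψ
    set τ : ℝ := L (0, 0, 1) with hτdef
    have hgen : ∀ i j, ((Pi.single i 1 : ι → ℝ), (Pi.single j 1 : ι → ℝ), d i j) ∈ krS d := by
      intro i j
      refine ⟨fun k l => ((Pi.single i 1 : ι → ℝ) k) * ((Pi.single j 1 : ι → ℝ) l), ?_, ?_, ?_, ?_⟩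
      · intro k l
        refine mul_nonneg ?_ ?_ <;> · rw [Pi.single_apply]; split <;> norm_num
      · intro k
        rw [← Finset.mul_sum]
        simp [Pi.single_apply, Finset.sum_ite_eq']
      · intro l
        rw [← Finset.sum_mul]
        simp [Pi.single_apply, Finset.sum_ite_eq']
      · simp only [Pi.single_apply]
        simp [ite_mul, mul_ite, Finset.sum_ite_eq']
    have hconstr : ∀ i j, φ i + ψ j + τ * d i j ≤ 0 := by
      intro i j
      have h := hLle _ (hgen i j)
      rw [kr_decomp] at h
      simpa [Pi.single_apply, ite_mul, Finset.sum_ite_eq', hφ, hψ, hτdef, mul_comm] using h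
    have hτ : τ ≤ 0 := by
      refine hLle (0, 0, 1) ⟨0, fun i j => le_rfl, by simp, by simp, by simp⟩
    have hv : 0 < ∑ i, a i * φ i + ∑ i, b i * ψ i + τ * (W - ε / 2) := by
      have h := hu
      rw [kr_decomp] at h
      simp only at h
      rw [mul_comm (W - ε/2) (L (0,0,1))] at h
      linarith
    have hτneg : τ < 0 := by
      rcases lt_or_eq_of_le hτ with h | h
      · exact h
      · exfalso
        obtain ⟨i₀, -, hi₀⟩ := Finset.exists_max_image (Finset.univ) φ
          ⟨Classical.arbitrary ι, Finset.mem_univ _⟩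
        obtain ⟨j₀, -, hj₀⟩ := Finset.exists_max_image (Finset.univ) ψ
          ⟨Classical.arbitrary ι, Finset.mem_univ _⟩
        have h1 : ∑ i, a i * φ i ≤ M * φ i₀ := by
          rw [hMdef, Finset.sum_mul]
          exact Finset.sum_le_sum fun i _ =>
            mul_le_mul_of_nonneg_left (hi₀ i (Finset.mem_univ i)) (ha i)
        have h2 : ∑ i, b i * ψ i ≤ M * ψ j₀ := by
          rw [hab, Finset.sum_mul]
          exact Finset.sum_le_sum fun i _ =>
            mul_le_mul_of_nonneg_left (hj₀ i (Finset.mem_univ i)) (hb i)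
        have h3 := hconstr i₀ j₀
        rw [h] at h3
        simp only [zero_mul, add_zero] at h3
        rw [h, zero_mul, add_zero] at hv
        have h4 : M * (φ i₀ + ψ j₀) ≤ M * 0 := mul_le_mul_of_nonneg_left h3 hMpos.le
        have h5 : M * (φ i₀ + ψ j₀) = M * φ i₀ + M * ψ j₀ := by ring
        linarith
    set T : ℝ := -τ with hT
    have hTpos : 0 < T := by rw [hT]; linarith
    set φ' : ι → ℝ := fun i => φ i / T with hφ'
    set ψ' : ι → ℝ := fun i => ψ i / T with hψ'
    have hconstr' : ∀ i j, φ' i + ψ' j ≤ d i j := by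
      intro i j
      have h1 := hconstr i j
      have h2 : T * d i j = -(τ * d i j) := by rw [hT]; ring
      have h3 : φ i + ψ j ≤ d i j * T := by rw [mul_comm]; linarith
      rw [hφ', hψ']
      simp only
      rw [← add_div, div_le_iff₀ hTpos]
      exact h3
    have hval : W - ε / 2 < ∑ i, a i * φ' i + ∑ i, b i * ψ' i := by
      have h1 : ∑ i, a i * φ' i = (∑ i, a i * φ i) / T := by
        rw [Finset.sum_div]
        exact Finset.sum_congr rfl fun i _ => by rw [hφ']; simp only; rw [mul_div_assoc]
      have h2 : ∑ i, b i * ψ' i = (∑ i, b i * ψ i) / T := by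
        rw [Finset.sum_div]
        exact Finset.sum_congr rfl fun i _ => by rw [hψ']; simp only; rw [mul_div_assoc]
      have h3 : T * (W - ε/2) < ∑ i, a i * φ i + ∑ i, b i * ψ i := by
        have : τ * (W - ε/2) = -(T * (W - ε/2)) := by rw [hT]; ring
        linarith [hv]
      rw [h1, h2, ← add_div, lt_div_iff₀ hTpos] at *
      linarith [h3]
    set f : ι → ℝ := fun i => Finset.univ.inf' Finset.univ_nonempty (fun k => d i k - ψ' k)
      with hf
    have hfub : ∀ i, f i ≤ -ψ' i := by
      intro i
      have := Finset.inf'_le (fun k => d i k - ψ' k) (Finset.mem_univ i)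
      rw [hf]; simp only
      simpa only [hd0 i, zero_sub] using this
    have hflb : ∀ i, φ' i ≤ f i := by
      intro i
      refine Finset.le_inf' _ _ fun k _ => ?_
      linarith [hconstr' i k]
    have hfLip : ∀ i j, f i - f j ≤ d i j := by
      intro i j
      obtain ⟨k, -, hk⟩ := Finset.exists_mem_eq_inf' (Finset.univ_nonempty)
        (fun k => d j k - ψ' k)
      have h1 : f i ≤ d i k - ψ' k := Finset.inf'_le _ (Finset.mem_univ k)
      have h2 : f j = d j k - ψ' k := hk
      have h3 := hdtri i j k
      linarith
    refine ⟨P, hPfeas.1, hPfeas.2.1, hPfeas.2.2, f, hfLip, ?_⟩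
    have h4 : ∑ i, a i * φ' i ≤ ∑ i, a i * f i :=
      Finset.sum_le_sum fun i _ => mul_le_mul_of_nonneg_left (hflb i) (ha i)
    have h5 : ∑ i, b i * ψ' i ≤ ∑ i, b i * (-f i) :=
      Finset.sum_le_sum fun i _ =>
        mul_le_mul_of_nonneg_left (by linarith [hfub i]) (hb i)
    have h6 : ∑ i, (a i - b i) * f i = ∑ i, a i * f i + ∑ i, b i * (-f i) := by
      rw [← Finset.sum_add_distrib]
      exact Finset.sum_congr rfl fun i _ => by ring
    linarith [hPlt, hval, h4, h5]
end LP

section Meas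
open Metric

variable {X : Type*} [MetricSpace X] [CompactSpace X] [MeasurableSpace X] [BorelSpace X]

lemma kr_integrable (f : X → ℝ) (hf : Continuous f) (μ : Measure X) [IsFiniteMeasure μ] :
    Integrable f μ :=
  hf.integrable_of_hasCompactSupport (HasCompactSupport.of_compactSpace f)

lemma kr_le_kant (α β : Measure X) {f : X → ℝ} (hf : LipschitzWith 1 f) :
    ENNReal.ofReal (∫ x, f x ∂α - ∫ x, f x ∂β) ≤ kantorovich α β :=
  le_iSup₂ (f := fun (f : X → ℝ) (_ : LipschitzWith 1 f) =>
    ENNReal.ofReal (∫ x, f x ∂α - ∫ x, f x ∂β)) f hf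

lemma kr_symm_le (α β : Measure X) : kantorovich α β ≤ kantorovich β α := by
  refine iSup₂_le fun f hf => ?_
  have h : ∫ x, f x ∂α - ∫ x, f x ∂β
      = ∫ x, (-f) x ∂β - ∫ x, (-f) x ∂α := by
    simp [integral_neg]; ring
  rw [h]
  exact kr_le_kant β α hf.neg

/-- The lower bound : every plan pays at least `K(μ,ν)`. -/
lemma kr_lower (μ ν : Measure X) [IsFiniteMeasure μ] [IsFiniteMeasure ν]
    {lam : ℝ} (hlam : 1 ≤ lam) (π : Measure (X × X)) [IsFiniteMeasure π] :
    kantorovich μ ν ≤ ENNReal.ofReal (∫ z, dist z.1 z.2 ∂π)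
      + ENNReal.ofReal lam * kantorovich π.fst μ
      + ENNReal.ofReal lam * kantorovich π.snd ν := by
  refine iSup₂_le fun f hf => ?_
  have hfc : Continuous f := hf.continuous
  have hif : ∀ (ρ : Measure X) [IsFiniteMeasure ρ], Integrable f ρ := fun ρ _ =>
    kr_integrable f hfc ρ
  have hfst : ∫ x, f x ∂π.fst = ∫ z, f z.1 ∂π := by
    show ∫ x, f x ∂(π.map Prod.fst) = _
    exact integral_map measurable_fst.aemeasurable
      (hfc.aestronglyMeasurable)
  have hsnd : ∫ x, f x ∂π.snd = ∫ z, f z.2 ∂π := by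
    show ∫ x, f x ∂(π.map Prod.snd) = _
    exact integral_map measurable_snd.aemeasurable
      (hfc.aestronglyMeasurable)
  have hint1 : Integrable (fun z : X × X => f z.1) π :=
    kr_integrable _ (hfc.comp continuous_fst) π
  have hint2 : Integrable (fun z : X × X => f z.2) π :=
    kr_integrable _ (hfc.comp continuous_snd) π
  have hintd : Integrable (fun z : X × X => dist z.1 z.2) π :=
    kr_integrable _ (continuous_fst.dist continuous_snd) π
  have hmid : ∫ x, f x ∂π.fst - ∫ x, f x ∂π.snd ≤ ∫ z, dist z.1 z.2 ∂π := by
    rw [hfst, hsnd, ← integral_sub hint1 hint2]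
    refine integral_mono (hint1.sub hint2) hintd fun z => ?_
    have h1 : f z.1 - f z.2 ≤ |f z.1 - f z.2| := le_abs_self _
    have h2 : |f z.1 - f z.2| = dist (f z.1) (f z.2) := (Real.dist_eq _ _).symm
    have h3 := hf.dist_le_mul z.1 z.2
    simp only [NNReal.coe_one, one_mul] at h3
    simp only
    linarith
  have hsplit : ∫ x, f x ∂μ - ∫ x, f x ∂ν
      = (∫ x, f x ∂μ - ∫ x, f x ∂π.fst) + (∫ x, f x ∂π.fst - ∫ x, f x ∂π.snd)
        + (∫ x, f x ∂π.snd - ∫ x, f x ∂ν) := by ring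
  have honele : (1 : ENNReal) ≤ ENNReal.ofReal lam := ENNReal.one_le_ofReal.2 hlam
  calc ENNReal.ofReal (∫ x, f x ∂μ - ∫ x, f x ∂ν)
      ≤ ENNReal.ofReal (∫ x, f x ∂μ - ∫ x, f x ∂π.fst)
        + ENNReal.ofReal (∫ x, f x ∂π.fst - ∫ x, f x ∂π.snd)
        + ENNReal.ofReal (∫ x, f x ∂π.snd - ∫ x, f x ∂ν) := by
        rw [hsplit]
        exact le_trans (ENNReal.ofReal_add_le) (add_le_add ENNReal.ofReal_add_le le_rfl)
    _ ≤ ENNReal.ofReal lam * kantorovich π.fst μ + ENNReal.ofReal (∫ z, dist z.1 z.2 ∂π)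
        + ENNReal.ofReal lam * kantorovich π.snd ν := by
        refine add_le_add (add_le_add ?_ ?_) ?_
        · refine le_trans (le_trans (kr_le_kant μ π.fst hf) (kr_symm_le μ π.fst)) ?_
          exact le_mul_of_one_le_left zero_le honele
        · exact ENNReal.ofReal_le_ofReal hmid
        · exact le_trans (kr_le_kant π.snd ν hf)
            (le_mul_of_one_le_left zero_le honele)
    _ = ENNReal.ofReal (∫ z, dist z.1 z.2 ∂π)
        + ENNReal.ofReal lam * kantorovich π.fst μ
        + ENNReal.ofReal lam * kantorovich π.snd ν := by ring


/-- A finite measurable partition of a compact space into `δ`-small pieces. -/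
lemma kr_partition {δ : ℝ} (hδ : 0 < δ) :
    ∃ (n : ℕ) (c : Fin n → X) (A : Fin n → Set X),
      (∀ k, MeasurableSet (A k)) ∧ (∀ i j, i ≠ j → Disjoint (A i) (A j)) ∧
      (⋃ k, A k) = Set.univ ∧ ∀ k, A k ⊆ ball (c k) δ := by
  classical
  obtain ⟨t, -, htfin, htcov⟩ := finite_cover_balls_of_compact (isCompact_univ (X := X)) hδ
  set s := htfin.toFinset with hs
  set n := s.card with hn
  set c : Fin n → X := fun i => (s.equivFin.symm i : X) with hc
  set B : ℕ → Set X := fun m => if h : m < n then ball (c ⟨m, h⟩) δ else ∅ with hB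
  refine ⟨n, c, fun k => disjointed B k.val, ?_, ?_, ?_, ?_⟩
  · intro k
    refine MeasurableSet.disjointed (fun m => ?_) _
    rw [hB]; dsimp only; split
    · exact measurableSet_ball
    · exact MeasurableSet.empty
  · intro i j hij
    exact disjoint_disjointed B (fun h => hij (Fin.val_injective h))
  · apply Set.eq_univ_of_univ_subset
    intro x _
    have hx : x ∈ ⋃ y ∈ t, ball y δ := htcov (Set.mem_univ x)
    obtain ⟨y, hy, hxy⟩ := Set.mem_iUnion₂.1 hx
    have hys : y ∈ s := htfin.mem_toFinset.2 hy
    set i : Fin n := s.equivFin ⟨y, hys⟩ with hi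
    have hci : c i = y := by rw [hc]; simp [hi]
    have hxB : x ∈ ⋃ m, B m := by
      refine Set.mem_iUnion.2 ⟨i.val, ?_⟩
      rw [hB]; dsimp only; rw [dif_pos i.isLt, Fin.eta, hci]
      exact hxy
    rw [← iUnion_disjointed] at hxB
    obtain ⟨m, hm⟩ := Set.mem_iUnion.1 hxB
    have hmn : m < n := by
      by_contra h
      have h2 := disjointed_subset B m hm
      rw [hB] at h2; dsimp only at h2; rw [dif_neg h] at h2
      exact h2
    exact Set.mem_iUnion.2 ⟨⟨m, hmn⟩, hm⟩
  · intro k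
    refine (disjointed_subset B k.val).trans ?_
    rw [hB]; dsimp only; rw [dif_pos k.isLt, Fin.eta]

lemma kr_sum_meas (μ : Measure X) [IsFiniteMeasure μ] {n : ℕ} (A : Fin n → Set X)
    (hmeas : ∀ k, MeasurableSet (A k)) (hdisj : ∀ i j, i ≠ j → Disjoint (A i) (A j))
    (hcover : (⋃ k, A k) = Set.univ) :
    ∑ k, (μ (A k)).toReal = (μ Set.univ).toReal := by
  rw [← ENNReal.toReal_sum (fun k _ => measure_ne_top μ _)]
  congr 1
  rw [← hcover, measure_iUnion (fun i j hij => hdisj i j hij) hmeas, tsum_fintype]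

/-- The key discretization estimate. -/
lemma kr_cell (μ : Measure X) [IsFiniteMeasure μ] {n : ℕ} (c : Fin n → X) (A : Fin n → Set X)
    (hmeas : ∀ k, MeasurableSet (A k)) (hdisj : ∀ i j, i ≠ j → Disjoint (A i) (A j))
    (hcover : (⋃ k, A k) = Set.univ) {δ : ℝ} (hsub : ∀ k, A k ⊆ ball (c k) δ)
    {f : X → ℝ} (hf : LipschitzWith 1 f) :
    ∑ k, (μ (A k)).toReal * f (c k) - ∫ x, f x ∂μ ≤ δ * (μ Set.univ).toReal := by
  have hint : Integrable f μ := kr_integrable f hf.continuous μ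
  have hsplit : ∫ x, f x ∂μ = ∑ k, ∫ x in A k, f x ∂μ := by
    have h1 : ⋃ k ∈ (Finset.univ : Finset (Fin n)), A k = Set.univ := by
      rw [← hcover]; simp
    have h2 := integral_biUnion_finset (μ := μ) (f := f) Finset.univ (fun k _ => hmeas k)
      (fun i _ j _ hij => hdisj i j hij) (fun k _ => hint.integrableOn)
    rw [h1, Measure.restrict_univ] at h2
    exact h2
  have hcell : ∀ k, (μ (A k)).toReal * f (c k) - ∫ x in A k, f x ∂μ
      ≤ δ * (μ (A k)).toReal := by
    intro k
    have hconstInt : IntegrableOn (fun _ : X => f (c k)) (A k) μ :=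
      integrableOn_const (measure_ne_top μ _)
    have hδInt : IntegrableOn (fun _ : X => δ) (A k) μ :=
      integrableOn_const (measure_ne_top μ _)
    have hsub' : ∫ x in A k, (f (c k) - f x) ∂μ
        = (μ (A k)).toReal * f (c k) - ∫ x in A k, f x ∂μ := by
      rw [integral_sub hconstInt hint.integrableOn, setIntegral_const, smul_eq_mul]; rfl
    have hmono : ∫ x in A k, (f (c k) - f x) ∂μ ≤ ∫ x in A k, δ ∂μ := by
      refine setIntegral_mono_on (hconstInt.sub hint.integrableOn) hδInt (hmeas k)
        fun x hx => ?_
      have h3 := hf.dist_le_mul (c k) x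
      simp only [NNReal.coe_one, one_mul] at h3
      have h4 : dist (c k) x < δ := by
        have := hsub k hx; rwa [mem_ball, dist_comm] at this
      have h5 : f (c k) - f x ≤ dist (f (c k)) (f x) := by
        rw [Real.dist_eq]; exact le_abs_self _
      linarith
    have hδval : ∫ x in A k, δ ∂μ = δ * (μ (A k)).toReal := by
      rw [setIntegral_const, smul_eq_mul, mul_comm]; rfl
    rw [hsub', hδval] at hmono
    exact hmono
  calc ∑ k, (μ (A k)).toReal * f (c k) - ∫ x, f x ∂μ
      = ∑ k, ((μ (A k)).toReal * f (c k) - ∫ x in A k, f x ∂μ) := by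
        rw [Finset.sum_sub_distrib, hsplit]
    _ ≤ ∑ k, δ * (μ (A k)).toReal := Finset.sum_le_sum fun k _ => hcell k
    _ = δ * (μ Set.univ).toReal := by
        rw [← Finset.mul_sum, kr_sum_meas μ A hmeas hdisj hcover]

lemma kr_upper (μ ν : Measure X) [IsFiniteMeasure μ] [IsFiniteMeasure ν]
    (hmass : μ Set.univ = ν Set.univ) {lam : ℝ} (hlam : 1 ≤ lam) :
    (⨅ (π : Measure (X × X)) (_ : IsFiniteMeasure π),
        ENNReal.ofReal (∫ z, dist z.1 z.2 ∂π)
          + ENNReal.ofReal lam * kantorovich π.fst μ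
          + ENNReal.ofReal lam * kantorovich π.snd ν)
    ≤ kantorovich μ ν := by
  classical
  refine ENNReal.le_of_forall_pos_le_add fun η hη _ => ?_
  have hηR : (0 : ℝ) < (η : ℝ) := hη
  set Mμ : ℝ := (μ Set.univ).toReal with hMμ
  set Mν : ℝ := (ν Set.univ).toReal with hMν
  have hMμ0 : 0 ≤ Mμ := ENNReal.toReal_nonneg
  have hMν0 : 0 ≤ Mν := ENNReal.toReal_nonneg
  set D : ℝ := (1 + lam) * (Mμ + Mν) + 1 with hD
  have hD0 : 0 < D := by nlinarith
  set δ : ℝ := (η : ℝ) / (2 * D) with hδdef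
  have hδ : 0 < δ := by positivity
  set ε : ℝ := (η : ℝ) / 2 with hεdef
  have hε : 0 < ε := by positivity
  obtain ⟨n, c, A, hmeas, hdisj, hcover, hsub⟩ := kr_partition (X := X) hδ
  set a : Fin n → ℝ := fun k => (μ (A k)).toReal with ha
  set b : Fin n → ℝ := fun k => (ν (A k)).toReal with hb
  have hsuma : ∑ k, a k = Mμ := kr_sum_meas μ A hmeas hdisj hcover
  have hsumb : ∑ k, b k = Mν := kr_sum_meas ν A hmeas hdisj hcover
  have hMeq : Mμ = Mν := by rw [hMμ, hMν, hmass]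
  obtain ⟨P, hP0, hProw, hPcol, fLP, hfLip, hcost⟩ :=
    kr_lp_duality (fun i j => dist (c i) (c j)) (fun i => dist_self _)
      (fun i j => dist_nonneg) (fun i j k => dist_triangle _ _ _) a b
      (fun k => ENNReal.toReal_nonneg) (fun k => ENNReal.toReal_nonneg)
      (by rw [hsuma, hsumb, hMeq]) hε
  -- extend the dual potential to a 1-Lipschitz function on X
  have hcons : ∀ i j, c i = c j → fLP i = fLP j := by
    intro i j hij
    have h1 := hfLip i j
    have h2 := hfLip j i
    rw [hij, dist_self] at h1
    rw [hij, dist_self] at h2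
    linarith
  set g₀ : X → ℝ := Function.extend c fLP 0 with hg₀def
  have hg₀ : ∀ i, g₀ (c i) = fLP i := by
    intro i
    rw [hg₀def, Function.extend_def, dif_pos ⟨i, rfl⟩]
    exact hcons _ i (Classical.choose_spec (⟨i, rfl⟩ : ∃ j, c j = c i))
  have hLipOn : LipschitzOnWith 1 g₀ (Set.range c) := by
    rw [lipschitzOnWith_iff_dist_le_mul]
    rintro x ⟨i, rfl⟩ y ⟨j, rfl⟩
    rw [hg₀ i, hg₀ j, NNReal.coe_one, one_mul, Real.dist_eq]
    rw [abs_sub_le_iff]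
    exact ⟨hfLip i j, by rw [dist_comm]; exact hfLip j i⟩
  obtain ⟨g, hgLip, hgeq⟩ := hLipOn.extend_real
  have hgc : ∀ i, g (c i) = fLP i := fun i => by
    rw [← hgeq (Set.mem_range_self i)]; exact hg₀ i
  -- the transport plan
  set π : Measure (X × X) :=
    ∑ p : Fin n × Fin n, ENNReal.ofReal (P p.1 p.2) • Measure.dirac (c p.1, c p.2) with hπ
  have hπfin : IsFiniteMeasure π := by
    constructor
    rw [hπ, Measure.finset_sum_apply]
    refine ENNReal.sum_lt_top.2 fun p _ => ?_
    rw [Measure.smul_apply, smul_eq_mul]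
    exact ENNReal.mul_lt_top ENNReal.ofReal_lt_top (by simp [measure_lt_top])
  have hπint : ∀ h : X × X → ℝ, Continuous h →
      ∫ z, h z ∂π = ∑ i, ∑ j, P i j * h (c i, c j) := by
    intro h hcont
    rw [hπ, integral_finset_sum_measure (fun p _ => ?_)]
    · simp_rw [integral_smul_measure, integral_dirac, smul_eq_mul]
      rw [Fintype.sum_prod_type]
      exact Finset.sum_congr rfl fun i _ => Finset.sum_congr rfl fun j _ => by
        rw [ENNReal.toReal_ofReal (hP0 i j)]
    · refine Integrable.smul_measure ?_ ENNReal.ofReal_ne_top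
      refine ⟨hcont.aestronglyMeasurable, ?_⟩
      simp [HasFiniteIntegral, lintegral_dirac]
  have hfstint : ∀ q : X → ℝ, Continuous q →
      ∫ x, q x ∂π.fst = ∑ i, a i * q (c i) := by
    intro q hq
    have h1 : ∫ x, q x ∂π.fst = ∫ z, q z.1 ∂π := by
      show ∫ x, q x ∂(π.map Prod.fst) = _
      exact integral_map measurable_fst.aemeasurable hq.aestronglyMeasurable
    rw [h1, hπint (fun z => q z.1) (hq.comp continuous_fst)]
    show ∑ i, ∑ j, P i j * q (c i) = _
    exact Finset.sum_congr rfl fun i _ => by rw [← Finset.sum_mul, hProw i]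
  have hsndint : ∀ q : X → ℝ, Continuous q →
      ∫ x, q x ∂π.snd = ∑ j, b j * q (c j) := by
    intro q hq
    have h1 : ∫ x, q x ∂π.snd = ∫ z, q z.2 ∂π := by
      show ∫ x, q x ∂(π.map Prod.snd) = _
      exact integral_map measurable_snd.aemeasurable hq.aestronglyMeasurable
    rw [h1, hπint (fun z => q z.2) (hq.comp continuous_snd), Finset.sum_comm]
    show ∑ j, ∑ i, P i j * q (c j) = _
    exact Finset.sum_congr rfl fun j _ => by rw [← Finset.sum_mul, hPcol j]
  -- the three bounds
  have hK1 : kantorovich π.fst μ ≤ ENNReal.ofReal (δ * Mμ) := by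
    refine iSup₂_le fun f hf => ENNReal.ofReal_le_ofReal ?_
    rw [hfstint f hf.continuous]
    exact kr_cell μ c A hmeas hdisj hcover hsub hf
  have hK2 : kantorovich π.snd ν ≤ ENNReal.ofReal (δ * Mν) := by
    refine iSup₂_le fun f hf => ENNReal.ofReal_le_ofReal ?_
    rw [hsndint f hf.continuous]
    exact kr_cell ν c A hmeas hdisj hcover hsub hf
  have hdint : ∫ z, dist z.1 z.2 ∂π = ∑ i, ∑ j, P i j * dist (c i) (c j) :=
    hπint (fun z => dist z.1 z.2) (continuous_fst.dist continuous_snd)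
  -- real estimate on the cost
  have hgbd1 : ∑ k, a k * g (c k) - ∫ x, g x ∂μ ≤ δ * Mμ :=
    kr_cell μ c A hmeas hdisj hcover hsub hgLip
  have hgbd2' : ∑ k, b k * (-g) (c k) - ∫ x, (-g) x ∂ν ≤ δ * Mν :=
    kr_cell ν c A hmeas hdisj hcover hsub hgLip.neg
  have hgbd2 : ∫ x, g x ∂ν - ∑ k, b k * g (c k) ≤ δ * Mν := by
    have h1 : ∑ k, b k * (-g) (c k) = -∑ k, b k * g (c k) := by
      simp [mul_neg]
    have h2 : ∫ x, (-g) x ∂ν = -∫ x, g x ∂ν := by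
      simp only [Pi.neg_apply]; exact integral_neg _
    rw [h1, h2] at hgbd2'
    linarith
  have hcost2 : ∑ i, ∑ j, P i j * dist (c i) (c j)
      ≤ (∫ x, g x ∂μ - ∫ x, g x ∂ν) + (δ * Mμ + δ * Mν + ε) := by
    have h1 : ∑ i, (a i - b i) * fLP i = ∑ k, a k * g (c k) - ∑ k, b k * g (c k) := by
      rw [← Finset.sum_sub_distrib]
      exact Finset.sum_congr rfl fun i _ => by rw [hgc i]; ring
    rw [h1] at hcost
    linarith
  -- assemble in ℝ≥0∞
  set I : ℝ := ∫ x, g x ∂μ - ∫ x, g x ∂ν with hI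
  have hlam0 : (0:ℝ) ≤ lam := by linarith
  have hR0 : (0:ℝ) ≤ δ * Mμ + δ * Mν + ε :=
    add_nonneg (add_nonneg (mul_nonneg hδ.le hMμ0) (mul_nonneg hδ.le hMν0)) hε.le
  have hS1 : (0:ℝ) ≤ lam * (δ * Mμ) := mul_nonneg hlam0 (mul_nonneg hδ.le hMμ0)
  have hS2 : (0:ℝ) ≤ lam * (δ * Mν) := mul_nonneg hlam0 (mul_nonneg hδ.le hMν0)
  have hval : ENNReal.ofReal (∫ z, dist z.1 z.2 ∂π)
      + ENNReal.ofReal lam * kantorovich π.fst μ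
      + ENNReal.ofReal lam * kantorovich π.snd ν
      ≤ kantorovich μ ν + ENNReal.ofReal ((δ * Mμ + δ * Mν + ε)
          + (lam * (δ * Mμ) + lam * (δ * Mν))) := by
    calc ENNReal.ofReal (∫ z, dist z.1 z.2 ∂π)
        + ENNReal.ofReal lam * kantorovich π.fst μ
        + ENNReal.ofReal lam * kantorovich π.snd ν
        ≤ ENNReal.ofReal (I + (δ * Mμ + δ * Mν + ε))
          + ENNReal.ofReal lam * ENNReal.ofReal (δ * Mμ)
          + ENNReal.ofReal lam * ENNReal.ofReal (δ * Mν) := by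
          refine add_le_add (add_le_add ?_ ?_) ?_
          · exact ENNReal.ofReal_le_ofReal (by rw [hdint]; exact hcost2)
          · exact mul_le_mul_right hK1 _
          · exact mul_le_mul_right hK2 _
      _ ≤ (ENNReal.ofReal I + ENNReal.ofReal (δ * Mμ + δ * Mν + ε))
          + ENNReal.ofReal (lam * (δ * Mμ)) + ENNReal.ofReal (lam * (δ * Mν)) := by
          refine add_le_add (add_le_add ENNReal.ofReal_add_le ?_) ?_
          · rw [ENNReal.ofReal_mul hlam0]
          · rw [ENNReal.ofReal_mul hlam0]
      _ = ENNReal.ofReal I + (ENNReal.ofReal (δ * Mμ + δ * Mν + ε)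
          + ENNReal.ofReal (lam * (δ * Mμ)) + ENNReal.ofReal (lam * (δ * Mν))) := by ring
      _ ≤ kantorovich μ ν + ENNReal.ofReal ((δ * Mμ + δ * Mν + ε)
          + (lam * (δ * Mμ) + lam * (δ * Mν))) := by
          refine add_le_add (kr_le_kant μ ν hgLip) ?_
          rw [ENNReal.ofReal_add hR0 (add_nonneg hS1 hS2), ENNReal.ofReal_add hS1 hS2]
          exact le_of_eq (add_assoc _ _ _)
  have harith : (δ * Mμ + δ * Mν + ε) + (lam * (δ * Mμ) + lam * (δ * Mν)) ≤ (η : ℝ) := by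
    have hδD : δ * D = (η : ℝ) / 2 := by
      rw [hδdef]; field_simp
    have hexp : (δ * Mμ + δ * Mν + ε) + (lam * (δ * Mμ) + lam * (δ * Mν))
        = (δ * D - δ) + ε := by rw [hD]; ring
    rw [hexp, hεdef]
    linarith [hδ.le, hδD]
  refine le_trans (iInf₂_le π hπfin) (le_trans hval ?_)
  refine add_le_add le_rfl ?_
  calc ENNReal.ofReal ((δ * Mμ + δ * Mν + ε) + (lam * (δ * Mμ) + lam * (δ * Mν)))
      ≤ ENNReal.ofReal (η : ℝ) := ENNReal.ofReal_le_ofReal harith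
    _ = (η : ENNReal) := ENNReal.ofReal_coe_nnreal

end Meas
end KRAux

/-- For finite Borel measures `μ, ν` of equal total mass and `λ ≥ 1`,
the Kantorovich-regularized unbalanced OT problem recovers exactly the Kantorovich
metric: the infimum over all finite Borel plans `π` of
`∫ d dπ + λ K(π₁,μ) + λ K(π₂,ν)` equals `K(μ,ν)`. -/
theorem kantorovich_regularized_ot_eq_kantorovich
    {X : Type*} [MetricSpace X] [CompactSpace X] [MeasurableSpace X] [BorelSpace X]
    (μ ν : Measure X) [IsFiniteMeasure μ] [IsFiniteMeasure ν]
    (hmass : μ Set.univ = ν Set.univ)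
    (lam : ℝ) (hlam : 1 ≤ lam) :
    (⨅ (π : Measure (X × X)) (_ : IsFiniteMeasure π),
        ENNReal.ofReal (∫ z, dist z.1 z.2 ∂π)
          + ENNReal.ofReal lam * kantorovich π.fst μ
          + ENNReal.ofReal lam * kantorovich π.snd ν)
    = kantorovich μ ν := by
  refine le_antisymm (kr_upper μ ν hmass hlam) ?_
  refine le_iInf fun π => le_iInf fun hπ => ?_
  haveI := hπ
  exact kr_lower μ ν hlam π
end

section
/- Let X be a compact metric space and let G ⊆ C(X,ℝ) be a set of continuous real-valued functions that is absolutely convex, pointwise bounded (for every x ∈ X the set {f(x) : f ∈ G} is bounded), and closed in the supremum-norm topology. Suppose in addition that the IPM γ_G is continuous with respect to weak convergence of finite measures: for all sequences of finite Borel measures μ_n → μ and ν_n → ν converging weakly, γ_G(μ_n, ν_n) → γ_G(μ, ν) (values taken in [0,∞]). Then G is a compact subset of C(X,ℝ) in the supremum-norm topology. -/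
open MeasureTheory Filter Topology BoundedContinuousFunction

/-- The integral probability metric generated by a set `G` of continuous functions,
with the supremum taken in `[0,∞]`. -/
noncomputable def ipm {X : Type*} [MeasurableSpace X] [TopologicalSpace X]
    (G : Set C(X, ℝ)) (μ ν : Measure X) : ENNReal :=
  ⨆ f ∈ G, ENNReal.ofReal |∫ x, f x ∂μ - ∫ x, f x ∂ν|

/-- If `G ⊆ C(X,ℝ)` (`X` compact metric) is absolutely convex,
pointwise bounded and closed in the sup-norm topology, and the IPM `γ_G` is
continuous with respect to weak convergence of finite measures, then `G` is compact
in the sup-norm topology. -/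
theorem generating_set_compact
    {X : Type*} [MetricSpace X] [CompactSpace X] [MeasurableSpace X] [BorelSpace X]
    (G : Set C(X, ℝ))
    (habsconv : ∀ f ∈ G, ∀ g ∈ G, ∀ a b : ℝ, |a| + |b| ≤ 1 → a • f + b • g ∈ G)
    (hptbdd : ∀ x : X, ∃ M : ℝ, ∀ f ∈ G, |f x| ≤ M)
    (hclosed : IsClosed G)
    (hcont : ∀ (μn νn : ℕ → Measure X) (μ ν : Measure X),
      (∀ n, IsFiniteMeasure (μn n)) → (∀ n, IsFiniteMeasure (νn n)) →
      IsFiniteMeasure μ → IsFiniteMeasure ν →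
      (∀ f : C(X, ℝ), Tendsto (fun n => ∫ x, f x ∂(μn n)) atTop (𝓝 (∫ x, f x ∂μ))) →
      (∀ f : C(X, ℝ), Tendsto (fun n => ∫ x, f x ∂(νn n)) atTop (𝓝 (∫ x, f x ∂ν))) →
      Tendsto (fun n => ipm G (μn n) (νn n)) atTop (𝓝 (ipm G μ ν))) :
    IsCompact G := by
  classical
  -- Step 1: equicontinuity of `G`, via the IPM continuity hypothesis applied to Dirac measures
  have hequi : Equicontinuous (fun f : G => ⇑(f : C(X, ℝ))) := by
    intro x₀
    rw [Metric.equicontinuousAt_iff]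
    by_contra hne
    push_neg at hne
    obtain ⟨ε, hε, hbad⟩ := hne
    -- choose points and functions witnessing failure of equicontinuity
    have hchoice : ∀ n : ℕ, ∃ x : X, dist x x₀ < 1 / (n + 1) ∧
        ∃ f : G, ε ≤ dist ((f : C(X, ℝ)) x₀) ((f : C(X, ℝ)) x) := by
      intro n
      obtain ⟨x, hx, f, hf⟩ := hbad (1 / (n + 1)) (by positivity)
      exact ⟨x, hx, f, hf⟩
    choose xs hxs fs hfs using hchoice
    have hxs_tendsto : Filter.Tendsto xs atTop (𝓝 x₀) := by
      rw [tendsto_iff_dist_tendsto_zero]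
      refine squeeze_zero (fun n => dist_nonneg) (fun n => (hxs n).le) ?_
      exact tendsto_one_div_add_atTop_nhds_zero_nat
    -- apply the IPM continuity hypothesis with Dirac measures
    have key := hcont (fun n => MeasureTheory.Measure.dirac (xs n))
      (fun n => MeasureTheory.Measure.dirac x₀)
      (MeasureTheory.Measure.dirac x₀) (MeasureTheory.Measure.dirac x₀)
      (fun n => inferInstance) (fun n => inferInstance) inferInstance inferInstance
      (fun f => by
        simpa [MeasureTheory.integral_dirac, Function.comp_def] using
          (f.continuous.tendsto x₀).comp hxs_tendsto)
      (fun f => by simp [MeasureTheory.integral_dirac])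
    have hzero : ipm G (MeasureTheory.Measure.dirac x₀) (MeasureTheory.Measure.dirac x₀) = 0 := by
      simp [ipm]
    rw [hzero] at key
    have hlt := key.eventually_lt_const (show (0:ENNReal) < ENNReal.ofReal ε by
      simpa using hε)
    have hge : ∀ n, ENNReal.ofReal ε ≤
        ipm G (MeasureTheory.Measure.dirac (xs n)) (MeasureTheory.Measure.dirac x₀) := by
      intro n
      have hmem : ((fs n : C(X, ℝ))) ∈ G := (fs n).2
      have hle : ENNReal.ofReal ε ≤
          ENNReal.ofReal |∫ x, (fs n : C(X, ℝ)) x ∂(MeasureTheory.Measure.dirac (xs n)) -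
            ∫ x, (fs n : C(X, ℝ)) x ∂(MeasureTheory.Measure.dirac x₀)| := by
        apply ENNReal.ofReal_le_ofReal
        rw [MeasureTheory.integral_dirac, MeasureTheory.integral_dirac]
        calc ε ≤ dist ((fs n : C(X, ℝ)) x₀) ((fs n : C(X, ℝ)) (xs n)) := hfs n
          _ = |(fs n : C(X, ℝ)) (xs n) - (fs n : C(X, ℝ)) x₀| := by
              rw [Real.dist_eq, abs_sub_comm]
      exact hle.trans (le_iSup₂ (f := fun f (_ : f ∈ G) =>
        ENNReal.ofReal |∫ x, f x ∂(MeasureTheory.Measure.dirac (xs n)) -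
          ∫ x, f x ∂(MeasureTheory.Measure.dirac x₀)|) _ hmem)
    obtain ⟨n, hn⟩ := hlt.exists
    exact absurd (hge n) (not_le.mpr hn)
  -- Step 2: uniform bound on `G`
  have hub : ∃ M : ℝ, ∀ f ∈ G, ∀ x : X, |f x| ≤ M := by
    have hEA : ∀ x : X, ∃ δ > 0, ∀ y : X, dist y x < δ →
        ∀ f ∈ G, |f y - f x| < 1 := by
      intro x
      obtain ⟨δ, hδ, h⟩ := (Metric.equicontinuousAt_iff.mp (hequi x)) 1 one_pos
      exact ⟨δ, hδ, fun y hy f hf => by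
        have := h y hy ⟨f, hf⟩
        rwa [Real.dist_eq, abs_sub_comm] at this⟩
    choose δ hδpos hδ using hEA
    choose M hM using hptbdd
    have hcover : (Set.univ : Set X) ⊆ ⋃ x : X, Metric.ball x (δ x) :=
      fun x _ => Set.mem_iUnion.mpr ⟨x, Metric.mem_ball_self (hδpos x)⟩
    obtain ⟨t, ht⟩ := isCompact_univ.elim_finite_subcover
      (fun x : X => Metric.ball x (δ x)) (fun x => Metric.isOpen_ball) hcover
    refine ⟨((t.sup fun i => ⌈M i⌉₊ : ℕ) : ℝ) + 1, fun f hf x => ?_⟩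
    obtain ⟨i, hi, hxi⟩ := Set.mem_iUnion₂.mp (ht (Set.mem_univ x))
    have h1 : |f x - f i| < 1 := hδ i x (Metric.mem_ball.mp hxi) f hf
    have h2 : |f i| ≤ M i := hM i f hf
    have h3 : M i ≤ ((t.sup fun i => ⌈M i⌉₊ : ℕ) : ℝ) := by
      calc M i ≤ (⌈M i⌉₊ : ℝ) := Nat.le_ceil _
        _ ≤ ((t.sup fun i => ⌈M i⌉₊ : ℕ) : ℝ) := by
            exact Nat.cast_le.mpr (Finset.le_sup (f := fun i => ⌈M i⌉₊) hi)
    calc |f x| = |(f x - f i) + f i| := by ring_nf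
      _ ≤ |f x - f i| + |f i| := abs_add_le _ _
      _ ≤ 1 + ((t.sup fun i => ⌈M i⌉₊ : ℕ) : ℝ) := add_le_add h1.le (h2.trans h3)
      _ = _ := by ring
  obtain ⟨M, hM⟩ := hub
  -- Step 3: transfer to bounded continuous functions and apply Arzelà–Ascoli
  let e : C(X, ℝ) ≃ (X →ᵇ ℝ) := ContinuousMap.equivBoundedOfCompact X ℝ
  have he : IsUniformEmbedding e := ContinuousMap.isUniformEmbedding_equivBoundedOfCompact X ℝ
  let hhomeo : C(X, ℝ) ≃ₜ (X →ᵇ ℝ) := e.toHomeomorphOfIsInducing he.isEmbedding.isInducing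
  rw [← hhomeo.isCompact_image]
  have hcoe : ∀ g : X →ᵇ ℝ, g ∈ hhomeo '' G → (g.toContinuousMap : C(X, ℝ)) ∈ G := by
    rintro g ⟨f, hf, rfl⟩
    exact hf
  refine BoundedContinuousFunction.arzela_ascoli₂ (Set.Icc (-M) M) isCompact_Icc
    (hhomeo '' G) (hhomeo.isClosedMap G hclosed) ?_ ?_
  · rintro g x ⟨f, hf, rfl⟩
    have := hM f hf x
    rw [abs_le] at this
    exact ⟨this.1, this.2⟩
  · have : Equicontinuous ((fun f : G => ⇑(f : C(X, ℝ))) ∘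
        (fun g : (hhomeo '' G : Set (X →ᵇ ℝ)) => (⟨(g : X →ᵇ ℝ).toContinuousMap, hcoe g g.2⟩ : G))) :=
      hequi.comp _
    convert this using 1
    rfl
end
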